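/- There exists a constant C > 0 such that for every integer d ≥ 1 there exists a real polynomial p of degree at most d with p(0) = 1 and ∫ p(x)² dγ(x) ≤ C/√d, where γ is the standard Gaussian measure N(0,1) on ℝ. -/

import Mathlib

open MeasureTheory ProbabilityTheory Polynomial Real

noncomputable def Hr (n : ℕ) : Polynomial ℝ := (Polynomial.hermite n).map (Int.castRingHom ℝ)

lemma Hr_succ (n : ℕ) : Hr (n+1) = X * Hr n - derivative (Hr n) := by
  unfold Hr
  rw [hermite_succ]
  simp [Polynomial.derivative_map]

lemma Hr_natDegree (n : ℕ) : (Hr n).natDegree ≤ n := by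
  simpa [Hr, Polynomial.natDegree_hermite] using Polynomial.natDegree_map_le (f := Int.castRingHom ℝ) (p := Polynomial.hermite n)

lemma Hr_coeff_self (n : ℕ) : (Hr n).coeff n = 1 := by
  simp [Hr, Polynomial.coeff_map, Polynomial.coeff_hermite_self]

lemma hasDerivAt_G (x : ℝ) :
    HasDerivAt (fun y : ℝ => Real.exp (-(y^2/2))) (-x * Real.exp (-(x^2/2))) x := by
  have h : HasDerivAt (fun y : ℝ => -(y^2/2)) (-x) x := by
    have h0 : HasDerivAt (fun y : ℝ => -(y^2/2)) _ x := ((hasDerivAt_pow 2 x).div_const 2).neg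
    simpa using h0
  simpa [mul_comm] using h.exp

lemma hasDerivAt_polyG (q : Polynomial ℝ) (x : ℝ) :
    HasDerivAt (fun y => q.eval y * Real.exp (-(y^2/2)))
      ((derivative q - X * q).eval x * Real.exp (-(x^2/2))) x := by
  have : HasDerivAt (fun y => q.eval y * Real.exp (-(y^2/2))) _ x := (q.hasDerivAt x).mul (hasDerivAt_G x)
  convert this using 1
  simp
  ring

lemma integrable_polyG (P : Polynomial ℝ) :
    Integrable (fun x => P.eval x * Real.exp (-(x^2/2))) := by
  have hmon : ∀ n : ℕ, Integrable (fun x : ℝ => x^n * Real.exp (-(x^2/2))) := by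
    intro n
    have h := integrable_rpow_mul_exp_neg_mul_sq (b := (1:ℝ)/2) (by norm_num)
      (s := n) (by exact_mod_cast neg_one_lt_zero.trans_le n.cast_nonneg)
    have : (fun x : ℝ => x ^ (n:ℝ) * Real.exp (-(1/2) * x^2))
        = fun x : ℝ => x^n * Real.exp (-(x^2/2)) := by
      funext x
      rw [Real.rpow_natCast]
      ring_nf
    rwa [this] at h
  have : (fun x => P.eval x * Real.exp (-(x^2/2)))
      = fun x => ∑ i ∈ Finset.range (P.natDegree + 1),
          P.coeff i * (x^i * Real.exp (-(x^2/2))) := by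
    funext x
    rw [Polynomial.eval_eq_sum_range, Finset.sum_mul]
    simp [mul_assoc]
  rw [this]
  exact integrable_finset_sum _ fun i _ => (hmon i).const_mul _

lemma parts (P Q : Polynomial ℝ) :
    ∫ x, (P * (X * Q - derivative Q)).eval x * Real.exp (-(x^2/2))
      = ∫ x, (derivative P * Q).eval x * Real.exp (-(x^2/2)) := by
  have h := integral_mul_deriv_eq_deriv_mul_of_integrable
    (u := fun x => P.eval x) (u' := fun x => (derivative P).eval x)
    (v := fun x => Q.eval x * Real.exp (-(x^2/2)))
    (v' := fun x => (derivative Q - X * Q).eval x * Real.exp (-(x^2/2)))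
    (fun x _ => P.hasDerivAt x) (fun x _ => hasDerivAt_polyG Q x)
    (by
      apply (integrable_polyG (P * (derivative Q - X * Q))).congr
      filter_upwards with x
      simp [mul_assoc])
    (by
      apply (integrable_polyG (derivative P * Q)).congr
      filter_upwards with x
      simp [mul_assoc])
    (by
      apply (integrable_polyG (P * Q)).congr
      filter_upwards with x
      simp [mul_assoc])
  have e1 : (fun x => P.eval x * ((derivative Q - X * Q).eval x * Real.exp (-(x^2/2))))
      = fun x => -((P * (X * Q - derivative Q)).eval x * Real.exp (-(x^2/2))) := by
    funext x; simp; ring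
  have e2 : (fun x => (derivative P).eval x * (Q.eval x * Real.exp (-(x^2/2))))
      = fun x => (derivative P * Q).eval x * Real.exp (-(x^2/2)) := by
    funext x; simp [mul_assoc]
  rw [e1, e2, integral_neg] at h
  linarith [h]

lemma Hr_zero : Hr 0 = 1 := by simp [Hr]

lemma reduce : ∀ (n : ℕ) (P : Polynomial ℝ),
    ∫ x, (P * Hr n).eval x * Real.exp (-(x^2/2))
      = ∫ x, (derivative^[n] P).eval x * Real.exp (-(x^2/2)) := by
  intro n
  induction n with
  | zero => intro P; simp [Hr_zero]
  | succ n ih =>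
    intro P
    rw [Hr_succ n, parts P (Hr n), ih (derivative P), Function.iterate_succ_apply]

lemma integral_G : ∫ x : ℝ, Real.exp (-(x^2/2)) = Real.sqrt (2 * Real.pi) := by
  have h := integral_gaussian (1/2)
  have e : (fun x : ℝ => Real.exp (-(1/2) * x^2)) = fun x : ℝ => Real.exp (-(x^2/2)) := by
    funext x; ring_nf
  rw [e] at h
  rw [h]
  rw [div_div_eq_mul_div, div_one, mul_comm]

lemma IHHlt (j k : ℕ) (h : j < k) :
    ∫ x, (Hr j * Hr k).eval x * Real.exp (-(x^2/2)) = 0 := by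
  rw [reduce k (Hr j), Polynomial.iterate_derivative_eq_zero ((Hr_natDegree j).trans_lt h)]
  simp

lemma IHHdiag (n : ℕ) :
    ∫ x, (Hr n * Hr n).eval x * Real.exp (-(x^2/2))
      = (n.factorial : ℝ) * Real.sqrt (2 * Real.pi) := by
  rw [reduce n (Hr n)]
  have h1 : derivative^[n] (Hr n) = C ((derivative^[n] (Hr n)).coeff 0) := by
    apply Polynomial.eq_C_of_natDegree_le_zero
    exact le_trans (Polynomial.natDegree_iterate_derivative _ _)
      (by have := Hr_natDegree n; omega)
  have h2 : (derivative^[n] (Hr n)).coeff 0 = (n.factorial : ℝ) := by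
    rw [Polynomial.coeff_iterate_derivative]
    simp [Hr_coeff_self, Nat.descFactorial_self]
  rw [h1, h2]
  simp only [Polynomial.eval_C]
  rw [MeasureTheory.integral_const_mul, integral_G]

lemma IHH (j k : ℕ) :
    ∫ x, (Hr j).eval x * (Hr k).eval x * Real.exp (-(x^2/2))
      = if j = k then (k.factorial : ℝ) * Real.sqrt (2 * Real.pi) else 0 := by
  have e : (fun x => (Hr j).eval x * (Hr k).eval x * Real.exp (-(x^2/2)))
      = fun x => (Hr j * Hr k).eval x * Real.exp (-(x^2/2)) := by
    funext x; simp
  rw [e]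
  by_cases h : j = k
  · subst h; rw [if_pos rfl]; exact IHHdiag j
  · rw [if_neg h]
    rcases lt_or_gt_of_ne h with hlt | hgt
    · exact IHHlt j k hlt
    · rw [mul_comm (Hr j) (Hr k)]; exact IHHlt k j hgt

lemma integral_gaussianReal_eq_G (f : ℝ → ℝ) :
    ∫ x, f x ∂(gaussianReal 0 1)
      = (Real.sqrt (2 * Real.pi))⁻¹ * ∫ x, f x * Real.exp (-(x^2/2)) := by
  rw [gaussianReal_of_var_ne_zero 0 one_ne_zero]
  have hpdf : (ProbabilityTheory.gaussianPDF 0 1)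
      = fun x => ((ProbabilityTheory.gaussianPDFReal 0 1 x).toNNReal : ENNReal) := by
    funext x; rfl
  rw [hpdf, integral_withDensity_eq_integral_smul
    ((ProbabilityTheory.measurable_gaussianPDFReal 0 1).real_toNNReal) f]
  have : (fun x => (ProbabilityTheory.gaussianPDFReal 0 1 x).toNNReal • f x)
      = fun x => (Real.sqrt (2 * Real.pi))⁻¹ * (f x * Real.exp (-(x^2/2))) := by
    funext x
    rw [NNReal.smul_def, Real.coe_toNNReal _ (ProbabilityTheory.gaussianPDFReal_nonneg 0 1 x)]
    rw [ProbabilityTheory.gaussianPDFReal_def]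
    push_cast
    rw [smul_eq_mul]
    ring_nf
  rw [this, MeasureTheory.integral_const_mul]

open scoped Nat in
noncomputable def rr (m : ℕ) : ℝ := ((2*m-1)‼ : ℝ)^2 / ((2*m).factorial : ℝ)

open scoped Nat in
lemma rr_succ (m : ℕ) : rr (m+1) = rr m * ((2*m+1) / (2*m+2)) := by
  have h1 : 2*(m+1)-1 = (2*m)+1 := by omega
  have h2 : ((2*m)+1)‼ = ((2*m)+1) * ((2*m)-1)‼ := Nat.doubleFactorial_add_one (2*m)
  have h3 : 2*m-1 = (2*m)-1 := rfl
  have h4 : (2*(m+1)).factorial = (2*m+2) * ((2*m+1) * (2*m).factorial) := by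
    have : 2*(m+1) = (2*m+1)+1 := by omega
    rw [this, Nat.factorial_succ, Nat.factorial_succ]
  unfold rr
  rw [h1, h2, h4]
  have hf : ((2*m).factorial : ℝ) ≠ 0 := by positivity
  push_cast
  field_simp

lemma rr_zero : rr 0 = 1 := by
  unfold rr
  norm_num

lemma rr_ge' (m : ℕ) : 1 / (2 * Real.sqrt ((m:ℝ) + 1/4)) ≤ rr m := by
  induction m with
  | zero =>
    rw [rr_zero]
    have : Real.sqrt ((0:ℕ) + 1/4) = 1/2 := by
      rw [show ((0:ℕ):ℝ) + 1/4 = (1/2)^2 by norm_num, Real.sqrt_sq (by norm_num)]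
    rw [this]; norm_num
  | succ m ih =>
    set a := Real.sqrt ((m:ℝ) + 1/4) with ha
    set b := Real.sqrt (((m+1 : ℕ):ℝ) + 1/4) with hb
    have ha2 : a^2 = (m:ℝ) + 1/4 := Real.sq_sqrt (by positivity)
    have hb2 : b^2 = (m:ℝ) + 5/4 := by
      rw [hb, Real.sq_sqrt (by positivity)]; push_cast; ring
    have hapos : 0 < a := Real.sqrt_pos.mpr (by positivity)
    have hbpos : 0 < b := Real.sqrt_pos.mpr (by positivity)
    have hkey : a * (2*(m:ℝ)+2) ≤ b * (2*(m:ℝ)+1) := by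
      have hsq : (a * (2*(m:ℝ)+2))^2 ≤ (b * (2*(m:ℝ)+1))^2 := by
        have e1 : (a * (2*(m:ℝ)+2))^2 = ((m:ℝ) + 1/4) * (2*(m:ℝ)+2)^2 := by
          rw [mul_pow, ha2]
        have e2 : (b * (2*(m:ℝ)+1))^2 = ((m:ℝ) + 5/4) * (2*(m:ℝ)+1)^2 := by
          rw [mul_pow, hb2]
        rw [e1, e2]; nlinarith [sq_nonneg ((m:ℝ))]
      have := Real.sqrt_le_sqrt hsq
      rwa [Real.sqrt_sq (by positivity), Real.sqrt_sq (by positivity)] at this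
    rw [rr_succ]
    calc 1 / (2 * b) ≤ 1 / (2 * a) * ((2*(m:ℝ)+1) / (2*(m:ℝ)+2)) := by
          rw [div_mul_div_comm, one_mul, div_le_div_iff₀ (by positivity) (by positivity)]
          nlinarith
      _ ≤ rr m * ((2*(m:ℝ)+1) / (2*(m:ℝ)+2)) := by
          apply mul_le_mul_of_nonneg_right ih (by positivity)
      _ = rr m * (((2*m:ℕ):ℝ)+1) / (((2*m:ℕ):ℝ)+2) := by push_cast; ring
      _ = rr m * ((2*↑m+1) / (2*↑m+2)) := by push_cast; ring

lemma rr_ge (m : ℕ) : Real.sqrt ((m:ℝ) + 2) - Real.sqrt ((m:ℝ) + 1) ≤ rr m := by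
  refine le_trans ?_ (rr_ge' m)
  set a := Real.sqrt ((m:ℝ) + 1) with ha
  set b := Real.sqrt ((m:ℝ) + 2) with hb
  have ha2 : a^2 = (m:ℝ) + 1 := Real.sq_sqrt (by positivity)
  have hb2 : b^2 = (m:ℝ) + 2 := Real.sq_sqrt (by positivity)
  have hapos : 0 < a := Real.sqrt_pos.mpr (by positivity)
  have hbpos : 0 < b := Real.sqrt_pos.mpr (by positivity)
  have hc : Real.sqrt ((m:ℝ) + 1/4) ≤ a := Real.sqrt_le_sqrt (by linarith)
  have hcpos : 0 < Real.sqrt ((m:ℝ) + 1/4) := Real.sqrt_pos.mpr (by positivity)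
  calc b - a ≤ 1 / (2 * a) := by
        rw [le_div_iff₀ (by positivity)]
        nlinarith [sq_nonneg (b - a)]
    _ ≤ 1 / (2 * Real.sqrt ((m:ℝ) + 1/4)) := by
        apply one_div_le_one_div_of_le (by positivity)
        linarith

lemma sum_rr (M : ℕ) :
    Real.sqrt ((M:ℝ) + 2) - 1 ≤ ∑ m ∈ Finset.range (M+1), rr m := by
  have htel : ∑ m ∈ Finset.range (M+1),
      (Real.sqrt ((m:ℝ) + 2) - Real.sqrt ((m:ℝ) + 1))
      = Real.sqrt ((M:ℝ) + 2) - 1 := by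
    have := Finset.sum_range_sub (f := fun m => Real.sqrt ((m:ℝ) + 1)) (M+1)
    simp only [Nat.cast_zero, zero_add, Real.sqrt_one] at this
    have e1 : Real.sqrt ((M:ℝ) + 2) - 1 = Real.sqrt (((M+1:ℕ):ℝ) + 1) - 1 := by
      push_cast; ring_nf
    rw [e1, ← this]
    apply Finset.sum_congr rfl
    intro m _
    push_cast
    ring_nf
  rw [← htel]
  exact Finset.sum_le_sum fun m _ => rr_ge m

open scoped Nat in
lemma rr_eq_Hr (m : ℕ) :
    rr m = ((Hr (2*m)).eval 0)^2 / (((2*m).factorial : ℕ):ℝ) := by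
  have h : (Hr (2*m)).eval 0 = (((Polynomial.hermite (2*m)).coeff 0 : ℤ) : ℝ) := by
    rw [← Polynomial.coeff_zero_eq_eval_zero]
    simp [Hr, Polynomial.coeff_map]
  have h2 : (Polynomial.hermite (2*m)).coeff 0 = (-1)^m * (2*m-1)‼ := by
    have := Polynomial.coeff_hermite_explicit m 0
    simpa using this
  have hsgn : (((-1:ℤ))^m : ℝ)^2 = 1 := by
    have : ((-1:ℤ)^m : ℝ) = (-1:ℝ)^m := by push_cast; ring
    rw [this, ← pow_mul, mul_comm m 2, pow_mul, neg_one_sq, one_pow]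
  rw [h, h2]
  unfold rr
  push_cast
  rw [mul_pow]
  rw [show ((-1:ℝ))^m = (((-1:ℤ))^m : ℝ) by push_cast; ring, hsgn, one_mul]

theorem stmt_10 :
    ∃ C : ℝ, 0 < C ∧
      ∀ d : ℕ, 1 ≤ d →
        ∃ p : Polynomial ℝ, p.natDegree ≤ d ∧ p.eval 0 = 1 ∧
          ∫ x, (p.eval x) ^ 2 ∂(gaussianReal 0 1) ≤ C / Real.sqrt d := by
  classical
  refine ⟨4, by norm_num, ?_⟩
  intro d hd
  set K : ℝ := ∑ k ∈ Finset.range (d+1), ((Hr k).eval 0)^2 / (k.factorial : ℝ) with hK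
  set q : Polynomial ℝ :=
    ∑ k ∈ Finset.range (d+1), C ((Hr k).eval 0 / (k.factorial : ℝ)) * Hr k with hq
  have hKterms : ∀ k : ℕ, (0:ℝ) ≤ ((Hr k).eval 0)^2 / (k.factorial : ℝ) := by
    intro k; positivity
  have hK1 : 1 ≤ K := by
    have h := Finset.single_le_sum
      (f := fun k : ℕ => ((Hr k).eval 0)^2 / (k.factorial : ℝ))
      (fun k _ => hKterms k) (Finset.mem_range.mpr (Nat.succ_pos d))
    simpa [Hr_zero] using h
  have hKpos : 0 < K := lt_of_lt_of_le one_pos hK1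
  have hqe : ∀ x : ℝ, q.eval x
      = ∑ k ∈ Finset.range (d+1), ((Hr k).eval 0 / (k.factorial : ℝ)) * (Hr k).eval x := by
    intro x
    rw [hq, Polynomial.eval_finset_sum]
    apply Finset.sum_congr rfl
    intro k _
    simp
  refine ⟨C K⁻¹ * q, ?_, ?_, ?_⟩
  · calc (C K⁻¹ * q).natDegree ≤ (C K⁻¹).natDegree + q.natDegree :=
          Polynomial.natDegree_mul_le
      _ ≤ d := by
          rw [Polynomial.natDegree_C, zero_add]
          apply Polynomial.natDegree_sum_le_of_forall_le
          intro k hk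
          calc (C ((Hr k).eval 0 / (k.factorial : ℝ)) * Hr k).natDegree
              ≤ (C ((Hr k).eval 0 / (k.factorial : ℝ))).natDegree + (Hr k).natDegree :=
                Polynomial.natDegree_mul_le
            _ ≤ d := by
                rw [Polynomial.natDegree_C, zero_add]
                exact le_trans (Hr_natDegree k) (Nat.lt_succ_iff.mp (Finset.mem_range.mp hk))
  · have hq0 : q.eval 0 = K := by
      rw [hqe 0, hK]
      apply Finset.sum_congr rfl
      intro k _
      ring
    simp [Polynomial.eval_mul, Polynomial.eval_C, hq0, inv_mul_cancel₀ hKpos.ne']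
  · have hintb : ∀ j k : ℕ,
        Integrable (fun x => (Hr j).eval x * (Hr k).eval x * Real.exp (-(x^2/2))) := by
      intro j k
      apply (integrable_polyG (Hr j * Hr k)).congr
      filter_upwards with x
      simp
    have hsqrtpos : (0:ℝ) < Real.sqrt (2 * Real.pi) :=
      Real.sqrt_pos.mpr (by positivity)
    have hsq : ∫ x, (q.eval x)^2 * Real.exp (-(x^2/2)) = Real.sqrt (2*Real.pi) * K := by
      have hexp : (fun x => (q.eval x)^2 * Real.exp (-(x^2/2)))
          = fun x => ∑ j ∈ Finset.range (d+1), ∑ k ∈ Finset.range (d+1),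
              ((Hr j).eval 0 / (j.factorial : ℝ)) * ((Hr k).eval 0 / (k.factorial : ℝ)) *
                ((Hr j).eval x * (Hr k).eval x * Real.exp (-(x^2/2))) := by
        funext x
        rw [hqe x, sq, Finset.sum_mul_sum, Finset.sum_mul]
        apply Finset.sum_congr rfl; intro j _
        rw [Finset.sum_mul]
        apply Finset.sum_congr rfl; intro k _
        ring
      rw [hexp, integral_finset_sum _
        (fun j _ => integrable_finset_sum _ (fun k _ => (hintb j k).const_mul _))]
      have hstep : ∀ j ∈ Finset.range (d+1),
          (∫ x, ∑ k ∈ Finset.range (d+1),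
            ((Hr j).eval 0 / (j.factorial : ℝ)) * ((Hr k).eval 0 / (k.factorial : ℝ)) *
              ((Hr j).eval x * (Hr k).eval x * Real.exp (-(x^2/2))))
          = ((Hr j).eval 0)^2 / (j.factorial : ℝ) * Real.sqrt (2*Real.pi) := by
        intro j hj
        rw [integral_finset_sum _ (fun k _ => (hintb j k).const_mul _)]
        have : ∀ k ∈ Finset.range (d+1),
            (∫ x, ((Hr j).eval 0 / (j.factorial : ℝ)) * ((Hr k).eval 0 / (k.factorial : ℝ)) *
              ((Hr j).eval x * (Hr k).eval x * Real.exp (-(x^2/2))))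
            = if j = k then
                ((Hr j).eval 0 / (j.factorial : ℝ)) * ((Hr k).eval 0 / (k.factorial : ℝ)) *
                  ((k.factorial : ℝ) * Real.sqrt (2*Real.pi)) else 0 := by
          intro k _
          rw [MeasureTheory.integral_const_mul, IHH]
          split_ifs <;> simp
        rw [Finset.sum_congr rfl this, Finset.sum_ite_eq _ j _, if_pos hj]
        have hfj : ((j.factorial : ℕ):ℝ) ≠ 0 := by positivity
        field_simp
      rw [Finset.sum_congr rfl hstep, ← Finset.sum_mul, ← hK]
      ring
    rw [integral_gaussianReal_eq_G]
    have hpe : (fun x => ((C K⁻¹ * q).eval x)^2 * Real.exp (-(x^2/2)))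
        = fun x => K⁻¹^2 * ((q.eval x)^2 * Real.exp (-(x^2/2))) := by
      funext x
      simp [Polynomial.eval_mul, Polynomial.eval_C, mul_pow]
      ring
    rw [hpe, MeasureTheory.integral_const_mul, hsq]
    have hval : (Real.sqrt (2*Real.pi))⁻¹ * (K⁻¹^2 * (Real.sqrt (2*Real.pi) * K)) = K⁻¹ := by
      field_simp
    rw [hval]
    -- now the bound K⁻¹ ≤ 4 / √d
    set M := d / 2 with hM
    have hsum : Real.sqrt ((M:ℝ)+2) - 1 ≤ K := by
      have h1 := sum_rr M
      have h2 : ∑ m ∈ Finset.range (M+1), rr m ≤ K := by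
        have himg : ∑ m ∈ Finset.range (M+1), rr m
            = ∑ k ∈ (Finset.range (M+1)).image (fun m => 2*m),
                ((Hr k).eval 0)^2 / (k.factorial : ℝ) := by
          rw [Finset.sum_image (by intro a _ b _ h; simp only at h; omega)]
          apply Finset.sum_congr rfl
          intro m _
          exact rr_eq_Hr m
        rw [himg, hK]
        apply Finset.sum_le_sum_of_subset_of_nonneg
        · intro k hk
          simp only [Finset.mem_image, Finset.mem_range] at *
          obtain ⟨m, hm, rfl⟩ := hk
          omega
        · intro k _ _
          positivity
      linarith
    have hd2 : (d:ℝ) ≤ 2*(M:ℝ) + 2 := by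
      have : d ≤ 2*M + 2 := by omega
      exact_mod_cast this
    set u := Real.sqrt ((M:ℝ)+2) with hu
    have hu2 : u^2 = (M:ℝ)+2 := Real.sq_sqrt (by positivity)
    have hupos : (0:ℝ) ≤ u := Real.sqrt_nonneg _
    have hMnn : (0:ℝ) ≤ (M:ℝ) := Nat.cast_nonneg _
    have hu13 : (13:ℝ)/10 ≤ u := by nlinarith
    have hw2 : (Real.sqrt (d:ℝ))^2 = (d:ℝ) := Real.sq_sqrt (by positivity)
    have hwpos : (0:ℝ) ≤ Real.sqrt (d:ℝ) := Real.sqrt_nonneg _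
    have hkey : Real.sqrt (d:ℝ) ≤ 4*(u - 1) := by
      have hsq2 : (Real.sqrt (d:ℝ))^2 ≤ (4*(u-1))^2 := by
        nlinarith [mul_nonneg (by linarith : (0:ℝ) ≤ u - 1) (by linarith : (0:ℝ) ≤ u - 9/7)]
      have h3 := Real.sqrt_le_sqrt hsq2
      rwa [Real.sqrt_sq hwpos, Real.sqrt_sq (by linarith)] at h3
    have hK4 : Real.sqrt (d:ℝ) ≤ 4*K := by linarith
    have hsd : (0:ℝ) < Real.sqrt (d:ℝ) := by
      apply Real.sqrt_pos.mpr
      have : (1:ℝ) ≤ (d:ℝ) := by exact_mod_cast hd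
      linarith
    calc K⁻¹ ≤ (Real.sqrt (d:ℝ)/4)⁻¹ := by
          apply inv_anti₀ (by positivity)
          linarith
      _ = 4 / Real.sqrt (d:ℝ) := inv_div _ _
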